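/- Let ≤P be any partial order on ℕ and define φ as below; let T be the closure of φ[ℕ] under initial segments. Then: (1) φ is an embedding of (ℕ, ≤P) into (Σ*, ⪯), i.e., φ is injective and a ≤P b if and only if φ(a) ⪯ φ(b); (2) every φ(v) is a leaf of T, i.e., no word of T properly extends φ(v); (3) all words in T are pairwise compatible; (4) if v and w are ≤P-incomparable, then there exist indices i, j < min(|φ(v)|, |φ(w)|) with φ(v)_i <lex φ(w)_i and φ(w)_j <lex φ(v)_j. -/

import Mathlib

/-- The three-letter alphabet `Σ = {L, X, R}`. -/
inductive Sig : Type
  | L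
  | X
  | R
  deriving DecidableEq

namespace Sig

def val : Sig → ℕ
  | L => 0
  | X => 1
  | R => 2

/-- The order `L <lex X <lex R` on letters. -/
def le (a b : Sig) : Prop := a.val ≤ b.val

def lt (a b : Sig) : Prop := a.val < b.val

end Sig

/-- Finite words over the alphabet `Σ = {L, X, R}`. -/
abbrev Word : Type := List Sig

/-- The `i`-th letter of `w` (with a junk value out of range). -/
def idx (w : Word) (i : ℕ) : Sig := w.getD i Sig.L

/-- Strict lexicographic order on words: comparison at the first differing position, a
proper initial segment preceding its extensions. -/
def lexLt (u v : Word) : Prop :=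
  (∃ i, i < u.length ∧ i < v.length ∧ Sig.lt (idx u i) (idx v i) ∧
    ∀ j < i, idx u j = idx v j) ∨
  (u.length < v.length ∧ ∀ j < u.length, idx u j = idx v j)

def lexLe (u v : Word) : Prop := lexLt u v ∨ u = v

/-- The relation `≺`: there is `i < min(|u|,|v|)` with `(u_i, v_i) = (L, R)` and
`u_j ≤lex v_j` for all `j < i`. -/
def prec (u v : Word) : Prop :=
  ∃ i, i < u.length ∧ i < v.length ∧ idx u i = Sig.L ∧ idx v i = Sig.R ∧
    ∀ j < i, Sig.le (idx u j) (idx v j)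

/-- The relation `⪯`. -/
def preceq (u v : Word) : Prop := prec u v ∨ u = v

/-- The relation `⊴`: element-wise comparison of words of the same length. -/
def trleq (u v : Word) : Prop :=
  u.length = v.length ∧ ∀ i < u.length, Sig.le (idx u i) (idx v i)

/-- The relation `⊥`: `⊴`-incomparability. -/
def perp (u v : Word) : Prop := ¬ trleq u v ∧ ¬ trleq v u

/-- `u` and `v` are related if `u ⪯ v`, `v ⪯ u` or `u ⊥ v`. -/
def related (u v : Word) : Prop := preceq u v ∨ preceq v u ∨ perp u v

/-- The compatibility conditions for a pair `u ≤lex v`. -/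
def compatPair (u v : Word) : Prop :=
  (∀ l < min u.length v.length, ¬ (idx u l = Sig.R ∧ idx v l = Sig.L)) ∧
  ((∃ l < min u.length v.length, idx u l = Sig.L ∧ idx v l = Sig.R) →
    ∀ l < min u.length v.length, Sig.le (idx u l) (idx v l))

/-- `u` and `v` are compatible: the `≤lex`-smaller of the two satisfies the compatibility
conditions with the `≤lex`-larger. -/
def compatible (u v : Word) : Prop :=
  (lexLe u v ∧ compatPair u v) ∨ (lexLe v u ∧ compatPair v u)

/-- `S̄`: the segClosure of `S` under initial segments. -/
def segClosure (S : Set Word) : Set Word := {u | ∃ w ∈ S, u <+: w}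

/-- Level `l` of a set of words. -/
def level (S : Set Word) (l : ℕ) : Set Word := {w | w ∈ S ∧ w.length = l}

/-- `S̄_l` : level `l` of the segClosure of `S`. -/
def cLevel (S : Set Word) (l : ℕ) : Set Word := level (segClosure S) l

/-- Isomorphism of level structures `(A; ⪯, ⊴, ≤lex)`: a bijection preserving and
reflecting `⪯`, `⊴` and `≤lex`. -/
def LevelIso (A B : Set Word) : Prop :=
  ∃ e : Word → Word, Set.BijOn e A B ∧
    ∀ u ∈ A, ∀ v ∈ A,
      (preceq u v ↔ preceq (e u) (e v)) ∧
      (trleq u v ↔ trleq (e u) (e v)) ∧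
      (lexLe u v ↔ lexLe (e u) (e v))

/-- A level `i` of `S` is interesting. -/
def Interesting (S : Set Word) (i : ℕ) : Prop :=
  ¬ LevelIso (cLevel S i) (cLevel S (i + 1)) ∨
  (∃ u ∈ cLevel S (i + 1), ∃ v ∈ cLevel S (i + 1),
    ¬ compatible u v ∧ compatible (u.take i) (v.take i)) ∨
  (∃ u ∈ S, u.length = i)

/-- `τ_S(w)`: delete the characters of `w` whose indices are not interesting levels of `S`. -/
noncomputable def tauW (S : Set Word) (w : Word) : Word :=
  ((List.range w.length).filter
    (fun i => @decide (Interesting S i) (Classical.propDecidable _))).map (fun i => idx w i)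

/-- A function is shape-preserving if it commutes with taking embedding types. -/
def ShapePreserving (S : Set Word) (f : Word → Word) : Prop :=
  ∀ w ∈ S, tauW S w = tauW (f '' S) (f w)

/-- `A⌢c`. -/
def appendSet (A : Set Word) (c : Sig) : Set Word := (fun w => w ++ [c]) '' A

def LeafLevelAt (S : Set Word) (l : ℕ) (w : Word) : Prop :=
  w ∈ cLevel S l ∧ (∀ u ∈ cLevel S l, u ≠ w → related w u) ∧
  cLevel S (l + 1) = appendSet (cLevel S l \ {w}) Sig.X

def LeafLevel (S : Set Word) (l : ℕ) : Prop := ∃ w, LeafLevelAt S l w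

def SplitLevelAt (S : Set Word) (l : ℕ) (w : Word) : Prop :=
  w ∈ cLevel S l ∧
  cLevel S (l + 1) =
    appendSet {z ∈ cLevel S l | lexLt z w} Sig.X ∪
    {w ++ [Sig.X], w ++ [Sig.R]} ∪
    appendSet {z ∈ cLevel S l | lexLt w z} Sig.R

def SplitLevel (S : Set Word) (l : ℕ) : Prop := ∃ w, SplitLevelAt S l w

def NewPerpLevelAt (S : Set Word) (l : ℕ) (v w : Word) : Prop :=
  v ∈ cLevel S l ∧ w ∈ cLevel S l ∧ lexLt v w ∧ ¬ related v w ∧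
  (∀ u ∈ cLevel S l, lexLt v u → lexLt u w → perp u v ∨ perp u w) ∧
  cLevel S (l + 1) =
    appendSet {z ∈ cLevel S l | lexLt z v} Sig.X ∪
    {v ++ [Sig.R]} ∪
    appendSet {z ∈ cLevel S l | lexLt v z ∧ lexLt z w ∧ perp z v} Sig.X ∪
    appendSet {z ∈ cLevel S l | lexLt v z ∧ lexLt z w ∧ ¬ perp z v} Sig.R ∪
    {w ++ [Sig.X]} ∪
    appendSet {z ∈ cLevel S l | lexLt w z} Sig.R

def NewPerpLevel (S : Set Word) (l : ℕ) : Prop := ∃ v w, NewPerpLevelAt S l v w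

def NewPrecLevelAt (S : Set Word) (l : ℕ) (v w : Word) : Prop :=
  v ∈ cLevel S l ∧ w ∈ cLevel S l ∧ lexLt v w ∧ ¬ related v w ∧
  (∀ u ∈ cLevel S l, lexLt u v → preceq u w ∨ perp u v) ∧
  (∀ u ∈ cLevel S l, lexLt w u → preceq v u ∨ perp w u) ∧
  cLevel S (l + 1) =
    appendSet {z ∈ cLevel S l | lexLt z v ∧ perp z v} Sig.X ∪
    appendSet {z ∈ cLevel S l | lexLt z v ∧ ¬ perp z v} Sig.L ∪
    {v ++ [Sig.L]} ∪
    appendSet {z ∈ cLevel S l | lexLt v z ∧ lexLt z w} Sig.X ∪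
    {w ++ [Sig.R]} ∪
    appendSet {z ∈ cLevel S l | lexLt w z ∧ perp w z} Sig.X ∪
    appendSet {z ∈ cLevel S l | lexLt w z ∧ ¬ perp w z} Sig.R

def NewPrecLevel (S : Set Word) (l : ℕ) : Prop := ∃ v w, NewPrecLevelAt S l v w

def ExactlyOne (a b c d : Prop) : Prop :=
  (a ∧ ¬b ∧ ¬c ∧ ¬d) ∨ (¬a ∧ b ∧ ¬c ∧ ¬d) ∨ (¬a ∧ ¬b ∧ c ∧ ¬d) ∨ (¬a ∧ ¬b ∧ ¬c ∧ d)

/-- A poset-diary: an antichain under the initial segment relation such that on each level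
below the supremum of lengths exactly one of the four critical events happens. -/
def PosetDiary (S : Set Word) : Prop :=
  (∀ u ∈ S, ∀ v ∈ S, u <+: v → u = v) ∧
  ∀ l : ℕ, (∃ w ∈ S, l < w.length) →
    ExactlyOne (LeafLevel S l) (SplitLevel S l) (NewPerpLevel S l) (NewPrecLevel S l)

/-- The embedding `φ` of a partial order `≤P` on `ℕ` into `(Σ*, ⪯)`: `φ(j)` has length
`2j+2`, ends with `LR`, and `(φ(j)_{2i}, φ(j)_{2i+1})` is `(L,L)` if `j <P i`, `(R,R)` if
`i <P j` and `(X,X)` otherwise, for `i < j`. -/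
noncomputable def phiWord (po : PartialOrder ℕ) (j : ℕ) : Word :=
  (List.range j).foldr
    (fun i acc =>
      (@ite Word (po.lt j i) (Classical.propDecidable _) [Sig.L, Sig.L]
        (@ite Word (po.lt i j) (Classical.propDecidable _) [Sig.R, Sig.R]
          [Sig.X, Sig.X])) ++ acc)
    [] ++ [Sig.L, Sig.R]


/- ### Auxiliary machinery for the proof -/

instance sigLeDec (a b : Sig) : Decidable (Sig.le a b) :=
  inferInstanceAs (Decidable (a.val ≤ b.val))

instance sigLtDec (a b : Sig) : Decidable (Sig.lt a b) :=
  inferInstanceAs (Decidable (a.val < b.val))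

noncomputable def cLet (po : PartialOrder ℕ) (j i : ℕ) : Sig :=
  @ite Sig (po.lt j i) (Classical.propDecidable _) Sig.L
    (@ite Sig (po.lt i j) (Classical.propDecidable _) Sig.R Sig.X)

lemma polt_trans (po : PartialOrder ℕ) {a b c : ℕ} (h1 : po.lt a b) (h2 : po.lt b c) :
    po.lt a c := by
  rw [po.lt_iff_le_not_ge] at *
  exact ⟨po.le_trans _ _ _ h1.1 h2.1, fun h => h1.2 (po.le_trans _ _ _ h2.1 h)⟩

lemma polt_asymm (po : PartialOrder ℕ) {a b : ℕ} (h : po.lt a b) : ¬ po.lt b a := by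
  rw [po.lt_iff_le_not_ge] at *
  exact fun h2 => h.2 h2.1

lemma polt_irrefl (po : PartialOrder ℕ) (a : ℕ) : ¬ po.lt a a := by
  rw [po.lt_iff_le_not_ge]
  exact fun h => h.2 h.1

lemma pole_of_lt (po : PartialOrder ℕ) {a b : ℕ} (h : po.lt a b) : po.le a b := by
  rw [po.lt_iff_le_not_ge] at h; exact h.1

lemma polt_of_le_ne (po : PartialOrder ℕ) {a b : ℕ} (h : po.le a b) (hne : a ≠ b) :
    po.lt a b := by
  rw [po.lt_iff_le_not_ge]
  exact ⟨h, fun h2 => hne (po.le_antisymm _ _ h h2)⟩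

lemma cLet_eq_L (po : PartialOrder ℕ) {j i : ℕ} (h : po.lt j i) : cLet po j i = Sig.L := by
  unfold cLet; rw [if_pos h]

lemma cLet_eq_R (po : PartialOrder ℕ) {j i : ℕ} (h1 : ¬ po.lt j i) (h2 : po.lt i j) :
    cLet po j i = Sig.R := by
  unfold cLet; rw [if_neg h1, if_pos h2]

lemma cLet_eq_X (po : PartialOrder ℕ) {j i : ℕ} (h1 : ¬ po.lt j i) (h2 : ¬ po.lt i j) :
    cLet po j i = Sig.X := by
  unfold cLet; rw [if_neg h1, if_neg h2]

lemma lt_of_cLet_L (po : PartialOrder ℕ) {j i : ℕ} (h : cLet po j i = Sig.L) : po.lt j i := by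
  unfold cLet at h
  split_ifs at h with h1 h2
  exact h1

lemma lt_of_cLet_R (po : PartialOrder ℕ) {j i : ℕ} (h : cLet po j i = Sig.R) : po.lt i j := by
  unfold cLet at h
  split_ifs at h with h1 h2
  exact h2

lemma sig_L_le (s : Sig) : Sig.le Sig.L s := by cases s <;> decide

lemma sig_le_R (s : Sig) : Sig.le s Sig.R := by cases s <;> decide

lemma sig_le_refl (s : Sig) : Sig.le s s := Nat.le_refl _

lemma sig_lt_or (a b : Sig) (h : a ≠ b) : Sig.lt a b ∨ Sig.lt b a := by
  cases a <;> cases b <;> revert h <;> decide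

lemma cLet_mono (po : PartialOrder ℕ) {a b : ℕ} (hab : po.lt a b) (i : ℕ) :
    Sig.le (cLet po a i) (cLet po b i) := by
  by_cases h1 : po.lt a i
  · rw [cLet_eq_L po h1]; exact sig_L_le _
  · by_cases h2 : po.lt i a
    · rw [cLet_eq_R po h1 h2, cLet_eq_R po (polt_asymm po (polt_trans po h2 hab))
        (polt_trans po h2 hab)]
      exact sig_le_refl _
    · have hbi : ¬ po.lt b i := fun h => h1 (polt_trans po hab h)
      rw [cLet_eq_X po h1 h2]
      by_cases h3 : po.lt i b
      · rw [cLet_eq_R po hbi h3]; decide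
      · rw [cLet_eq_X po hbi h3]; decide

lemma foldr_append_eq (g : ℕ → Word) (l : List ℕ) (init : Word) :
    l.foldr (fun i acc => g i ++ acc) init = l.flatMap g ++ init := by
  induction l with
  | nil => simp
  | cons a t ih => simp [ih]

lemma flatMap_pairs (g : ℕ → Sig) (n : ℕ) :
    (List.range n).flatMap (fun i => [g i, g i]) =
      (List.range (2*n)).map (fun k => g (k/2)) := by
  induction n with
  | zero => simp
  | succ n ih =>
    have e1 : 2*n/2 = n := by omega
    have e2 : (2*n+1)/2 = n := by omega
    have h2 : 2*(n+1) = (2*n+1)+1 := by ring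
    rw [List.range_succ, h2, List.range_succ, show 2*n+1 = (2*n)+1 from rfl, List.range_succ]
    simp [ih, e1, e2]

lemma phi_eq (po : PartialOrder ℕ) (j : ℕ) :
    phiWord po j = (List.range (2*j)).map (fun k => cLet po j (k/2)) ++ [Sig.L, Sig.R] := by
  unfold phiWord
  congr 1
  have hbody : ∀ i : ℕ,
      (@ite Word (po.lt j i) (Classical.propDecidable _) [Sig.L, Sig.L]
        (@ite Word (po.lt i j) (Classical.propDecidable _) [Sig.R, Sig.R]
          [Sig.X, Sig.X])) = [cLet po j i, cLet po j i] := by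
    intro i
    unfold cLet
    split_ifs <;> rfl
  simp only [hbody]
  rw [foldr_append_eq, List.append_nil]
  exact flatMap_pairs _ _

lemma phi_len (po : PartialOrder ℕ) (j : ℕ) : (phiWord po j).length = 2*j+2 := by
  rw [phi_eq]; simp

lemma phi_idx_lt (po : PartialOrder ℕ) {j k : ℕ} (h : k < 2*j) :
    idx (phiWord po j) k = cLet po j (k/2) := by
  rw [phi_eq]
  unfold idx
  rw [List.getD_append _ _ _ _ (by simpa using h),
    List.getD_eq_getElem _ _ (by simpa using h)]
  simp

lemma phi_idx_2j (po : PartialOrder ℕ) (j : ℕ) : idx (phiWord po j) (2*j) = Sig.L := by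
  rw [phi_eq]
  unfold idx
  rw [List.getD_append_right _ _ _ _ (by simp)]
  simp

lemma phi_idx_2j1 (po : PartialOrder ℕ) (j : ℕ) : idx (phiWord po j) (2*j+1) = Sig.R := by
  rw [phi_eq]
  unfold idx
  rw [List.getD_append_right _ _ _ _ (by simp)]
  simp

lemma idx_prefix {u w : Word} (h : u <+: w) {k : ℕ} (hk : k < u.length) :
    idx u k = idx w k := by
  obtain ⟨t, rfl⟩ := h
  unfold idx
  rw [List.getD_append _ _ _ _ hk]

lemma word_eq_of_idx {u v : Word} (hl : u.length = v.length)
    (h : ∀ j < u.length, idx u j = idx v j) : u = v := by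
  apply List.ext_getElem hl
  intro n h1 h2
  have hn := h n h1
  unfold idx at hn
  rwa [List.getD_eq_getElem _ _ h1, List.getD_eq_getElem _ _ h2] at hn

lemma lexLe_total (u v : Word) : lexLe u v ∨ lexLe v u := by
  classical
  by_cases h : ∃ j, j < u.length ∧ j < v.length ∧ idx u j ≠ idx v j
  · set i := Nat.find h with hidef
    obtain ⟨hi1, hi2, hi3⟩ := Nat.find_spec h
    have hmin : ∀ j < i, idx u j = idx v j := by
      intro j hj
      by_contra hc
      exact Nat.find_min h hj ⟨hj.trans hi1, hj.trans hi2, hc⟩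
    rcases sig_lt_or _ _ hi3 with hlt | hlt
    · exact Or.inl (Or.inl (Or.inl ⟨i, hi1, hi2, hlt, hmin⟩))
    · exact Or.inr (Or.inl (Or.inl ⟨i, hi2, hi1, hlt, fun j hj => (hmin j hj).symm⟩))
  · push_neg at h
    rcases Nat.lt_trichotomy u.length v.length with hl | hl | hl
    · exact Or.inl (Or.inl (Or.inr ⟨hl, fun j hj => h j hj (hj.trans hl)⟩))
    · exact Or.inl (Or.inr (word_eq_of_idx hl (fun j hj => h j hj (hl ▸ hj))))
    · exact Or.inr (Or.inl (Or.inr ⟨hl, fun j hj => (h j (hj.trans hl) hj).symm⟩))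

lemma sig_le_of_vals {a b : Sig} (h : Sig.le a b) : a.val ≤ b.val := h

lemma compat_of_pointwise {u v : Word}
    (h : ∀ l, l < u.length → l < v.length → Sig.le (idx u l) (idx v l)) :
    compatible u v := by
  rcases lexLe_total u v with hle | hle
  · left
    refine ⟨hle, fun l hl hc => ?_, fun _ l hl => ?_⟩
    · have := h l (lt_of_lt_of_le hl (min_le_left _ _)) (lt_of_lt_of_le hl (min_le_right _ _))
      rw [hc.1, hc.2] at this
      exact absurd this (by decide)
    · exact h l (lt_of_lt_of_le hl (min_le_left _ _)) (lt_of_lt_of_le hl (min_le_right _ _))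
  · right
    have heq : ∀ l, l < v.length → l < u.length → idx v l = idx u l := by
      rcases hle with hlt | rfl
      · rcases hlt with ⟨i, hi1, hi2, hi3, _⟩ | ⟨hlen, hall⟩
        · exfalso
          have h1 := h i hi2 hi1
          have h2 : (idx v i).val < (idx u i).val := hi3
          have h3 : (idx u i).val ≤ (idx v i).val := h1
          omega
        · intro l h1 _
          exact hall l h1
      · intro l _ _; rfl
    refine ⟨hle, fun l hl hc => ?_, fun _ l hl => ?_⟩
    · have := heq l (lt_of_lt_of_le hl (min_le_left _ _)) (lt_of_lt_of_le hl (min_le_right _ _))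
      rw [hc.1, hc.2] at this
      exact absurd this (by decide)
    · rw [heq l (lt_of_lt_of_le hl (min_le_left _ _)) (lt_of_lt_of_le hl (min_le_right _ _))]
      exact sig_le_refl _

lemma compat_of_noMix {u v : Word}
    (h : ∀ l, l < u.length → l < v.length →
      ¬(idx u l = Sig.L ∧ idx v l = Sig.R) ∧ ¬(idx u l = Sig.R ∧ idx v l = Sig.L)) :
    compatible u v := by
  rcases lexLe_total u v with hle | hle
  · left
    refine ⟨hle, fun l hl hc => ?_, fun hex => ?_⟩
    · exact (h l (lt_of_lt_of_le hl (min_le_left _ _))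
        (lt_of_lt_of_le hl (min_le_right _ _))).2 hc
    · obtain ⟨l, hl, hc⟩ := hex
      exact absurd hc (h l (lt_of_lt_of_le hl (min_le_left _ _))
        (lt_of_lt_of_le hl (min_le_right _ _))).1
  · right
    refine ⟨hle, fun l hl hc => ?_, fun hex => ?_⟩
    · exact (h l (lt_of_lt_of_le hl (min_le_right _ _))
        (lt_of_lt_of_le hl (min_le_left _ _))).1 ⟨hc.2, hc.1⟩
    · obtain ⟨l, hl, hc⟩ := hex
      exact absurd ⟨hc.2, hc.1⟩ (h l (lt_of_lt_of_le hl (min_le_right _ _))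
        (lt_of_lt_of_le hl (min_le_left _ _))).2

lemma pointwise_phi (po : PartialOrder ℕ) {a b : ℕ} (hab : po.lt a b) :
    ∀ l, l < 2*a+2 → l < 2*b+2 → Sig.le (idx (phiWord po a) l) (idx (phiWord po b) l) := by
  intro l hla hlb
  have hne : a ≠ b := fun h => polt_irrefl po a (h ▸ hab)
  rcases Nat.lt_trichotomy a b with hn | hn | hn
  · rcases show l < 2*a ∨ l = 2*a ∨ l = 2*a+1 by clear! po; omega with hc | hc | hc
    · rw [phi_idx_lt po hc, phi_idx_lt po (by clear! po; omega)]
      exact cLet_mono po hab _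
    · subst hc
      rw [phi_idx_2j]
      exact sig_L_le _
    · subst hc
      rw [phi_idx_2j1, phi_idx_lt po (by clear! po; omega), show (2*a+1)/2 = a by clear! po; omega,
        cLet_eq_R po (polt_asymm po hab) hab]
      decide
  · exact absurd hn hne
  · rcases show l < 2*b ∨ l = 2*b ∨ l = 2*b+1 by clear! po; omega with hc | hc | hc
    · rw [phi_idx_lt po (by clear! po; omega), phi_idx_lt po hc]
      exact cLet_mono po hab _
    · subst hc
      rw [phi_idx_2j, phi_idx_lt po (by clear! po; omega), show 2*b/2 = b by clear! po; omega, cLet_eq_L po hab]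
      decide
    · subst hc
      rw [phi_idx_2j1]
      exact sig_le_R _

lemma noMix_phi (po : PartialOrder ℕ) {a b : ℕ} (hab : a ≠ b)
    (h1 : ¬ po.lt a b) (h2 : ¬ po.lt b a) :
    ∀ l, l < 2*a+2 → l < 2*b+2 →
      ¬(idx (phiWord po a) l = Sig.L ∧ idx (phiWord po b) l = Sig.R) ∧
      ¬(idx (phiWord po a) l = Sig.R ∧ idx (phiWord po b) l = Sig.L) := by
  intro l hla hlb
  have hmix : ∀ {k : ℕ}, k < 2*a → k < 2*b →
      ¬(idx (phiWord po a) k = Sig.L ∧ idx (phiWord po b) k = Sig.R) ∧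
      ¬(idx (phiWord po a) k = Sig.R ∧ idx (phiWord po b) k = Sig.L) := by
    intro k hka hkb
    rw [phi_idx_lt po hka, phi_idx_lt po hkb]
    constructor
    · rintro ⟨e1, e2⟩
      exact h1 (polt_trans po (lt_of_cLet_L po e1) (lt_of_cLet_R po e2))
    · rintro ⟨e1, e2⟩
      exact h2 (polt_trans po (lt_of_cLet_L po e2) (lt_of_cLet_R po e1))
  rcases Nat.lt_trichotomy a b with hn | hn | hn
  · rcases show l < 2*a ∨ l = 2*a ∨ l = 2*a+1 by clear! po; omega with hc | hc | hc
    · exact hmix hc (by clear! po; omega)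
    · subst hc
      rw [phi_idx_2j, phi_idx_lt po (by clear! po; omega), show 2*a/2 = a by clear! po; omega, cLet_eq_X po h2 h1]
      constructor <;> rintro ⟨e1, e2⟩ <;> exact absurd e2 (by decide)
    · subst hc
      rw [phi_idx_2j1, phi_idx_lt po (by clear! po; omega), show (2*a+1)/2 = a by clear! po; omega,
        cLet_eq_X po h2 h1]
      constructor <;> rintro ⟨e1, e2⟩ <;> first
        | exact absurd e1 (by decide)
        | exact absurd e2 (by decide)
  · exact absurd hn hab
  · rcases show l < 2*b ∨ l = 2*b ∨ l = 2*b+1 by clear! po; omega with hc | hc | hc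
    · exact hmix (by clear! po; omega) hc
    · subst hc
      rw [phi_idx_2j, phi_idx_lt po (by clear! po; omega), show 2*b/2 = b by clear! po; omega, cLet_eq_X po h1 h2]
      constructor <;> rintro ⟨e1, e2⟩ <;> exact absurd e1 (by decide)
    · subst hc
      rw [phi_idx_2j1, phi_idx_lt po (by clear! po; omega), show (2*b+1)/2 = b by clear! po; omega,
        cLet_eq_X po h1 h2]
      constructor <;> rintro ⟨e1, e2⟩ <;> exact absurd e1 (by decide)

lemma prec_phi_of_lt (po : PartialOrder ℕ) {a b : ℕ} (h : po.lt a b) :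
    prec (phiWord po a) (phiWord po b) := by
  rcases Nat.lt_trichotomy a b with hn | hn | hn
  · refine ⟨2*a, ?_, ?_, ?_, ?_, ?_⟩
    · rw [phi_len]; clear! po; omega
    · rw [phi_len]; clear! po; omega
    · exact phi_idx_2j po a
    · rw [phi_idx_lt po (show 2*a < 2*b by clear! po; omega), show 2*a/2 = a by clear! po; omega]
      exact cLet_eq_R po (polt_asymm po h) h
    · intro j hj
      rw [phi_idx_lt po (by clear! po; omega), phi_idx_lt po (by clear! po; omega)]
      exact cLet_mono po h _
  · exact absurd (hn ▸ h) (polt_irrefl po b)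
  · refine ⟨2*b+1, ?_, ?_, ?_, ?_, ?_⟩
    · rw [phi_len]; clear! po; omega
    · rw [phi_len]; clear! po; omega
    · rw [phi_idx_lt po (show 2*b+1 < 2*a by clear! po; omega), show (2*b+1)/2 = b by clear! po; omega]
      exact cLet_eq_L po h
    · exact phi_idx_2j1 po b
    · intro j hj
      rcases show j < 2*b ∨ j = 2*b by clear! po; omega with hc | hc
      · rw [phi_idx_lt po (by clear! po; omega), phi_idx_lt po (by clear! po; omega)]
        exact cLet_mono po h _
      · subst hc
        rw [phi_idx_lt po (by clear! po; omega), show 2*b/2 = b by clear! po; omega, cLet_eq_L po h, phi_idx_2j]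
        decide

lemma lt_of_prec_phi (po : PartialOrder ℕ) {a b : ℕ}
    (h : prec (phiWord po a) (phiWord po b)) : po.lt a b := by
  obtain ⟨i, h1, h2, hL, hR, _⟩ := h
  rw [phi_len] at h1 h2
  have hla : po.lt a (i/2) ∨ i = 2*a := by
    rcases show i < 2*a ∨ i = 2*a ∨ i = 2*a+1 by clear! po; omega with hc | hc | hc
    · left; exact lt_of_cLet_L po (by rwa [phi_idx_lt po hc] at hL)
    · right; exact hc
    · exfalso; rw [hc, phi_idx_2j1] at hL; exact absurd hL (by decide)
  have hlb : po.lt (i/2) b ∨ i = 2*b+1 := by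
    rcases show i < 2*b ∨ i = 2*b ∨ i = 2*b+1 by clear! po; omega with hc | hc | hc
    · left; exact lt_of_cLet_R po (by rwa [phi_idx_lt po hc] at hR)
    · exfalso; rw [hc, phi_idx_2j] at hR; exact absurd hR (by decide)
    · right; exact hc
  rcases hla with h | h <;> rcases hlb with h' | h'
  · exact polt_trans po h h'
  · rwa [h', show (2*b+1)/2 = b by clear! po; omega] at h
  · rwa [h, show 2*a/2 = a by clear! po; omega] at h'
  · clear! po; omega

/-- `φ` is an embedding of `(ℕ, ≤P)` into `(Σ*, ⪯)`, its values are leaves of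
`T = closure of φ[ℕ]`, all words of `T` are pairwise compatible, and incomparable vertices
are mapped to `⊥`-witnessed words. -/
theorem phiWord_embedding (po : PartialOrder ℕ) :
    -- (1)
    (Function.Injective (phiWord po) ∧
      ∀ a b : ℕ, po.le a b ↔ preceq (phiWord po a) (phiWord po b)) ∧
    -- (2)
    (∀ v : ℕ, ∀ u ∈ segClosure (Set.range (phiWord po)),
      phiWord po v <+: u → u = phiWord po v) ∧
    -- (3)
    (∀ u ∈ segClosure (Set.range (phiWord po)),
      ∀ v ∈ segClosure (Set.range (phiWord po)), compatible u v) ∧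
    -- (4)
    (∀ v w : ℕ, ¬ po.le v w → ¬ po.le w v →
      ∃ i < min (phiWord po v).length (phiWord po w).length,
        ∃ j < min (phiWord po v).length (phiWord po w).length,
          Sig.lt (idx (phiWord po v) i) (idx (phiWord po w) i) ∧
          Sig.lt (idx (phiWord po w) j) (idx (phiWord po v) j)) := by
  have hinj : Function.Injective (phiWord po) := by
    intro a b hab
    have := congrArg List.length hab
    rw [phi_len, phi_len] at this
    omega
  refine ⟨⟨hinj, ?_⟩, ?_, ?_, ?_⟩
  · -- (1) order embedding
    intro a b
    constructor
    · intro hle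
      by_cases hab : a = b
      · exact Or.inr (congrArg _ hab)
      · exact Or.inl (prec_phi_of_lt po (polt_of_le_ne po hle hab))
    · rintro (hp | he)
      · exact pole_of_lt po (lt_of_prec_phi po hp)
      · rw [hinj he]; exact po.le_refl b
  · -- (2) leaves
    intro v u hu hpre
    obtain ⟨w0, ⟨w, rfl⟩, hu2⟩ := hu
    by_cases hvw : v = w
    · subst hvw
      exact hu2.eq_of_length (Nat.le_antisymm hu2.length_le hpre.length_le)
    · exfalso
      have hvw2 : phiWord po v <+: phiWord po w := hpre.trans hu2
      have hlen : v < w := by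
        have := hvw2.length_le
        rw [phi_len, phi_len] at this
        rcases Nat.lt_or_ge v w with h | h
        · exact h
        · exact absurd (by clear! po; omega : v = w) hvw
      have e1 : cLet po w v = Sig.L := by
        have := idx_prefix hvw2 (k := 2*v) (by rw [phi_len]; clear! po; omega)
        rwa [phi_idx_2j, phi_idx_lt po (by clear! po; omega), show 2*v/2 = v by clear! po; omega, eq_comm] at this
      have e2 : cLet po w v = Sig.R := by
        have := idx_prefix hvw2 (k := 2*v+1) (by rw [phi_len]; clear! po; omega)
        rwa [phi_idx_2j1, phi_idx_lt po (by clear! po; omega), show (2*v+1)/2 = v by clear! po; omega, eq_comm]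
          at this
      rw [e1] at e2
      exact absurd e2 (by decide)
  · -- (3) compatibility
    intro u hu v hv
    obtain ⟨u0, ⟨a, rfl⟩, hua⟩ := hu
    obtain ⟨v0, ⟨b, rfl⟩, hvb⟩ := hv
    have hul : u.length ≤ 2*a+2 := by
      have := hua.length_le; rwa [phi_len] at this
    have hvl : v.length ≤ 2*b+2 := by
      have := hvb.length_le; rwa [phi_len] at this
    by_cases hab : a = b
    · subst hab
      apply compat_of_pointwise
      intro l h1 h2
      rw [idx_prefix hua h1, idx_prefix hvb h2]
      exact sig_le_refl _
    · by_cases h1 : po.lt a b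
      · apply compat_of_pointwise
        intro l hl1 hl2
        rw [idx_prefix hua hl1, idx_prefix hvb hl2]
        exact pointwise_phi po h1 l (by clear! po; omega) (by clear! po; omega)
      · by_cases h2 : po.lt b a
        · have : compatible v u := by
            apply compat_of_pointwise
            intro l hl1 hl2
            rw [idx_prefix hvb hl1, idx_prefix hua hl2]
            exact pointwise_phi po h2 l (by clear! po; omega) (by clear! po; omega)
          unfold compatible at this ⊢
          tauto
        · apply compat_of_noMix
          intro l hl1 hl2
          rw [idx_prefix hua hl1, idx_prefix hvb hl2]
          exact noMix_phi po hab h1 h2 l (by clear! po; omega) (by clear! po; omega)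
  · -- (4) incomparable pairs
    intro v w hvw hwv
    have hlt1 : ¬ po.lt v w := fun h => hvw (pole_of_lt po h)
    have hlt2 : ¬ po.lt w v := fun h => hwv (pole_of_lt po h)
    have hne : v ≠ w := fun h => hvw (h ▸ po.le_refl v)
    rw [phi_len, phi_len]
    rcases Nat.lt_trichotomy v w with hn | hn | hn
    · refine ⟨2*v, by clear! po; omega, 2*v+1, by clear! po; omega, ?_, ?_⟩
      · rw [phi_idx_2j, phi_idx_lt po (by clear! po; omega), show 2*v/2 = v by clear! po; omega,
          cLet_eq_X po hlt2 hlt1]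
        decide
      · rw [phi_idx_2j1, phi_idx_lt po (by clear! po; omega), show (2*v+1)/2 = v by clear! po; omega,
          cLet_eq_X po hlt2 hlt1]
        decide
    · exact absurd hn hne
    · refine ⟨2*w+1, by clear! po; omega, 2*w, by clear! po; omega, ?_, ?_⟩
      · rw [phi_idx_2j1, phi_idx_lt po (by clear! po; omega), show (2*w+1)/2 = w by clear! po; omega,
          cLet_eq_X po hlt1 hlt2]
        decide
      · rw [phi_idx_2j, phi_idx_lt po (by clear! po; omega), show 2*w/2 = w by clear! po; omega,
          cLet_eq_X po hlt1 hlt2]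
        decide
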